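/- arXiv:1907.01699 — 5 statements merged into one kernel-verified Lean document; each statement's English description precedes it below -/
import Mathlib

section
/- Let D = {(x,y) ∈ ℝ² : 1 < x ≤ 2 and exp(−1/(x−1)) ≤ y ≤ exp(−1)}. Then the function (x,y) ↦ 1/(x·y) is NOT Lebesgue-integrable on D (i.e., ¬ IntegrableOn (fun p => 1/(p.1 * p.2)) D with respect to the Lebesgue measure on ℝ²). -/
open MeasureTheory Real Set

lemma aux_not_integrableOn_inv :
    ¬ IntegrableOn (fun x : ℝ => (x - 1)⁻¹) (Ioc 1 (3/2)) := by
  intro h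
  have : IntervalIntegrable (fun x : ℝ => (x - 1)⁻¹) volume 1 (3/2) := by
    rw [intervalIntegrable_iff_integrableOn_Ioc_of_le (by norm_num)]
    exact h
  rw [intervalIntegrable_sub_inv_iff] at this
  rcases this with h1 | h2
  · norm_num at h1
  · exact h2 (by rw [Set.mem_uIcc]; left; constructor <;> norm_num)

lemma aux_lintegral_inv_top :
    ∫⁻ x in Ioc (1:ℝ) (3/2), ENNReal.ofReal ((x - 1)⁻¹) = ⊤ := by
  by_contra hne
  apply aux_not_integrableOn_inv
  refine ⟨((measurable_id.sub measurable_const).inv).aestronglyMeasurable, ?_⟩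
  rw [hasFiniteIntegral_def]
  have : ∫⁻ x in Ioc (1:ℝ) (3/2), ‖(x - 1)⁻¹‖ₑ =
      ∫⁻ x in Ioc (1:ℝ) (3/2), ENNReal.ofReal ((x - 1)⁻¹) := by
    refine setLIntegral_congr_fun measurableSet_Ioc ?_
    intro x hx
    beta_reduce
    rw [Real.enorm_eq_ofReal (inv_nonneg.mpr (by linarith [hx.1]))]
  rw [this]
  exact lt_top_iff_ne_top.2 hne

lemma aux_inner (x : ℝ) (hx : x ∈ Ioc (1:ℝ) (3/2)) :
    ENNReal.ofReal (4⁻¹ * (x - 1)⁻¹) ≤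
      ∫⁻ y in Icc (Real.exp (-1/(x-1))) (Real.exp (-1)),
        ENNReal.ofReal (1/(x*y)) := by
  obtain ⟨hx1, hx2⟩ := hx
  have ht : (0:ℝ) < x - 1 := by linarith
  have hu : (2:ℝ) ≤ (x - 1)⁻¹ := by
    rw [show (2:ℝ) = (2⁻¹)⁻¹ by norm_num]
    exact inv_anti₀ ht (by norm_num; linarith)
  set a := Real.exp (-1/(x-1)) with ha_def
  set b := Real.exp (-1) with hb_def
  have ha : 0 < a := exp_pos _
  have hb : 0 < b := exp_pos _
  have hab : a ≤ b := by
    apply exp_le_exp.mpr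
    rw [neg_div, one_div, neg_le_neg_iff]
    linarith
  have step1 : ∫⁻ y in Icc a b, ENNReal.ofReal (2⁻¹ * y⁻¹) ≤
      ∫⁻ y in Icc a b, ENNReal.ofReal (1/(x*y)) := by
    refine setLIntegral_mono
      ((measurable_const.div (measurable_const.mul measurable_id)).ennreal_ofReal) ?_
    intro y hy
    have hy0 : 0 < y := lt_of_lt_of_le ha hy.1
    apply ENNReal.ofReal_le_ofReal
    rw [one_div, show (2:ℝ)⁻¹ * y⁻¹ = (2*y)⁻¹ by rw [mul_inv]]
    exact inv_anti₀ (by positivity) (by nlinarith)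
  have hcont : IntegrableOn (fun y : ℝ => 2⁻¹ * y⁻¹) (Icc a b) := by
    apply ContinuousOn.integrableOn_compact isCompact_Icc
    exact continuousOn_const.mul (continuousOn_id.inv₀
      (fun y hy => ne_of_gt (lt_of_lt_of_le ha hy.1)))
  have step2 : ∫⁻ y in Icc a b, ENNReal.ofReal (2⁻¹ * y⁻¹) =
      ENNReal.ofReal (2⁻¹ * ((x-1)⁻¹ - 1)) := by
    rw [← ofReal_integral_eq_lintegral_ofReal hcont ?_]
    · congr 1
      rw [integral_Icc_eq_integral_Ioc, ← intervalIntegral.integral_of_le hab,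
        intervalIntegral.integral_const_mul, integral_inv_of_pos ha hb,
        log_div (exp_ne_zero _) (exp_ne_zero _), log_exp, log_exp]
      rw [div_eq_mul_inv]
      ring
    · filter_upwards [ae_restrict_mem measurableSet_Icc] with y hy
      have hy0 : 0 < y := lt_of_lt_of_le ha hy.1
      positivity
  calc ENNReal.ofReal (4⁻¹ * (x - 1)⁻¹)
      ≤ ENNReal.ofReal (2⁻¹ * ((x-1)⁻¹ - 1)) := ENNReal.ofReal_le_ofReal (by linarith)
    _ = ∫⁻ y in Icc a b, ENNReal.ofReal (2⁻¹ * y⁻¹) := step2.symm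
    _ ≤ _ := step1

/-- The paper's counterexample (Remark `counter example` (1)): the function
`(x, y) ↦ 1/(x·y)` is not Lebesgue-integrable on the region
`D = {(x,y) : 1 < x ≤ 2, exp(−1/(x−1)) ≤ y ≤ exp(−1)}` of `ℝ²`, i.e. the integral
`∫_D (dz₁/z₁)∧(dz₂/z₂)` diverges. -/
theorem not_integrableOn_counterexample :
    ¬ MeasureTheory.IntegrableOn (fun p : ℝ × ℝ => 1 / (p.1 * p.2))
      {p : ℝ × ℝ | 1 < p.1 ∧ p.1 ≤ 2 ∧
        Real.exp (-1 / (p.1 - 1)) ≤ p.2 ∧ p.2 ≤ Real.exp (-1)} := by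
  intro h
  set D : Set (ℝ × ℝ) := {p : ℝ × ℝ | 1 < p.1 ∧ p.1 ≤ 2 ∧
      Real.exp (-1 / (p.1 - 1)) ≤ p.2 ∧ p.2 ≤ Real.exp (-1)} with hD_def
  have hD : MeasurableSet D := by
    have h1 : MeasurableSet {p : ℝ × ℝ | 1 < p.1} :=
      measurableSet_lt measurable_const measurable_fst
    have h2 : MeasurableSet {p : ℝ × ℝ | p.1 ≤ 2} :=
      measurableSet_le measurable_fst measurable_const
    have h3 : MeasurableSet {p : ℝ × ℝ | Real.exp (-1 / (p.1 - 1)) ≤ p.2} :=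
      measurableSet_le ((measurable_const.div (measurable_fst.sub measurable_const)).exp)
        measurable_snd
    have h4 : MeasurableSet {p : ℝ × ℝ | p.2 ≤ Real.exp (-1)} :=
      measurableSet_le measurable_snd measurable_const
    have : D = {p : ℝ × ℝ | 1 < p.1} ∩ ({p : ℝ × ℝ | p.1 ≤ 2} ∩
        ({p : ℝ × ℝ | Real.exp (-1 / (p.1 - 1)) ≤ p.2} ∩
          {p : ℝ × ℝ | p.2 ≤ Real.exp (-1)})) := by
      ext p; simp [hD_def, and_assoc]
    rw [this]
    exact h1.inter (h2.inter (h3.inter h4))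
  -- the indicator of the ofReal of the function
  set g : ℝ × ℝ → ENNReal :=
    D.indicator (fun p => ENNReal.ofReal (1 / (p.1 * p.2))) with hg_def
  have hg_meas : Measurable g :=
    Measurable.indicator ((measurable_const.div
      (measurable_fst.mul measurable_snd)).ennreal_ofReal) hD
  -- the set integral of the norm dominates the integral of g
  have hfin : (∫⁻ p in D, (‖1 / (p.1 * p.2)‖₊ : ENNReal)) < ⊤ := h.2
  have hle1 : ∫⁻ p, g p ≤ ∫⁻ p in D, (‖1 / (p.1 * p.2)‖₊ : ENNReal) := by
    rw [← lintegral_indicator hD]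
    refine lintegral_mono fun p => ?_
    by_cases hp : p ∈ D
    · rw [hg_def, indicator_of_mem hp, indicator_of_mem hp]
      rw [← enorm_eq_nnnorm, Real.enorm_eq_ofReal_abs]
      exact ENNReal.ofReal_le_ofReal (le_abs_self _)
    · rw [hg_def, indicator_of_notMem hp, indicator_of_notMem hp]
  -- Tonelli
  have htonelli : ∫⁻ p, g p = ∫⁻ x, ∫⁻ y, g (x, y) := by
    rw [Measure.volume_eq_prod]
    exact lintegral_prod g hg_meas.aemeasurable
  -- lower bound the inner integral
  have hinner : ∀ x : ℝ,
      (Ioc (1:ℝ) (3/2)).indicator (fun x => ENNReal.ofReal (4⁻¹ * (x - 1)⁻¹)) x ≤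
        ∫⁻ y, g (x, y) := by
    intro x
    by_cases hx : x ∈ Ioc (1:ℝ) (3/2)
    · rw [indicator_of_mem hx]
      have hxg : ∀ y : ℝ, g (x, y) =
          (Icc (Real.exp (-1/(x-1))) (Real.exp (-1))).indicator
            (fun y => ENNReal.ofReal (1 / (x * y))) y := by
        intro y
        by_cases hy : y ∈ Icc (Real.exp (-1/(x-1))) (Real.exp (-1))
        · rw [hg_def, indicator_of_mem hy, indicator_of_mem]
          exact ⟨hx.1, by linarith [hx.2], hy.1, hy.2⟩
        · rw [hg_def, indicator_of_notMem hy, indicator_of_notMem]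
          intro hmem
          exact hy ⟨hmem.2.2.1, hmem.2.2.2⟩
      calc ENNReal.ofReal (4⁻¹ * (x - 1)⁻¹)
          ≤ ∫⁻ y in Icc (Real.exp (-1/(x-1))) (Real.exp (-1)),
              ENNReal.ofReal (1 / (x * y)) := aux_inner x hx
        _ = ∫⁻ y, g (x, y) := by
            rw [← lintegral_indicator measurableSet_Icc]
            exact lintegral_congr fun y => (hxg y).symm
    · rw [indicator_of_notMem hx]
      exact zero_le
  -- the outer integral of the lower bound is infinite
  have hout : ∫⁻ x, (Ioc (1:ℝ) (3/2)).indicator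
      (fun x => ENNReal.ofReal (4⁻¹ * (x - 1)⁻¹)) x = ⊤ := by
    rw [lintegral_indicator measurableSet_Ioc]
    have : ∀ x : ℝ, ENNReal.ofReal (4⁻¹ * (x - 1)⁻¹) =
        ENNReal.ofReal 4⁻¹ * ENNReal.ofReal ((x - 1)⁻¹) := fun x =>
      ENNReal.ofReal_mul (by norm_num)
    simp_rw [this]
    rw [lintegral_const_mul' _ _ ENNReal.ofReal_ne_top, aux_lintegral_inv_top,
      ENNReal.mul_top (by simp)]
  -- conclude
  have : (⊤ : ENNReal) ≤ ∫⁻ p in D, (‖1 / (p.1 * p.2)‖₊ : ENNReal) := by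
    calc (⊤ : ENNReal) = ∫⁻ x, (Ioc (1:ℝ) (3/2)).indicator
          (fun x => ENNReal.ofReal (4⁻¹ * (x - 1)⁻¹)) x := hout.symm
      _ ≤ ∫⁻ x, ∫⁻ y, g (x, y) := lintegral_mono hinner
      _ = ∫⁻ p, g p := htonelli.symm
      _ ≤ _ := hle1
  exact absurd hfin (not_lt_of_ge this)
end

section
/- Let k ≥ 1 be an integer and let a be a real number with 0 < a < 1. Let Δ = {t : Fin k → ℝ | 0 < t 0, t j < t (j+1) for all j < k−1, and t (k−1) < a} be the open simplex of increasing k-tuples below a. Then the function t ↦ (1/(1 − t 0)) · ∏_{j=1}^{k−1} (1/t j) is Lebesgue-integrable on Δ, and its integral equals ∑_{n=1}^∞ aⁿ/nᵏ (the value Li_k(a) of the k-th polylogarithm at a). -/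
open MeasureTheory ENNReal Finset

lemma lint_pow {b : ℝ} (hb : 0 < b) (n : ℕ) :
    ∫⁻ x in Set.Ioo 0 b, ENNReal.ofReal (x ^ n) = ENNReal.ofReal (b ^ (n+1) / (n+1)) := by
  rw [← ofReal_integral_eq_lintegral_ofReal]
  · rw [← MeasureTheory.integral_Ioc_eq_integral_Ioo,
      ← intervalIntegral.integral_of_le hb.le, integral_pow]
    norm_num
  · exact (continuous_pow n).continuousOn.integrableOn_Icc.mono_set Set.Ioo_subset_Icc_self
  · filter_upwards [ae_restrict_mem measurableSet_Ioo] with x hx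
    exact pow_nonneg hx.1.le n

def simSet (m : ℕ) (a : ℝ) : Set (Fin (m+1) → ℝ) :=
  {t | 0 < t 0 ∧ (∀ i : Fin m, t i.castSucc < t i.succ) ∧ t (Fin.last m) < a}

lemma measurableSet_simSet (m : ℕ) (a : ℝ) : MeasurableSet (simSet m a) := by
  have h1 : MeasurableSet {t : Fin (m+1) → ℝ | 0 < t 0} :=
    measurableSet_lt measurable_const (measurable_pi_apply 0)
  have h2 : MeasurableSet {t : Fin (m+1) → ℝ | ∀ i : Fin m, t i.castSucc < t i.succ} := by
    rw [Set.setOf_forall]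
    exact MeasurableSet.iInter fun i =>
      measurableSet_lt (measurable_pi_apply _) (measurable_pi_apply _)
  have h3 : MeasurableSet {t : Fin (m+1) → ℝ | t (Fin.last m) < a} :=
    measurableSet_lt (measurable_pi_apply _) measurable_const
  exact (h1.inter (h2.inter h3))

lemma simSet_mono {m : ℕ} {a : ℝ} {t : Fin (m+1) → ℝ} (ht : t ∈ simSet m a) :
    StrictMono t := Fin.strictMono_iff_lt_succ.2 ht.2.1

lemma simSet_pos {m : ℕ} {a : ℝ} {t : Fin (m+1) → ℝ} (ht : t ∈ simSet m a) (i : Fin (m+1)) :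
    0 < t i := lt_of_lt_of_le ht.1 ((simSet_mono ht).monotone (Fin.zero_le i))

lemma simSet_lt {m : ℕ} {a : ℝ} {t : Fin (m+1) → ℝ} (ht : t ∈ simSet m a) (i : Fin (m+1)) :
    t i < a := lt_of_le_of_lt ((simSet_mono ht).monotone (Fin.le_last i)) ht.2.2

noncomputable def g (m n : ℕ) (t : Fin (m+1) → ℝ) : ℝ := t 0 ^ n * ∏ j : Fin m, (t j.succ)⁻¹

lemma g_meas (m n : ℕ) : Measurable (fun t => ENNReal.ofReal (g m n t)) := by
  apply ENNReal.measurable_ofReal.comp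
  exact ((measurable_pi_apply 0).pow_const n).mul
    (Finset.measurable_prod _ fun j _ => (measurable_pi_apply _).inv)

lemma g_nonneg {m n : ℕ} {a : ℝ} {t : Fin (m+1) → ℝ} (ht : t ∈ simSet m a) : 0 ≤ g m n t := by
  apply mul_nonneg (pow_nonneg (simSet_pos ht 0).le n)
  exact Finset.prod_nonneg fun j _ => (inv_nonneg.2 (simSet_pos ht _).le)

lemma key (m n : ℕ) : ∀ {a : ℝ}, 0 < a →
    ∫⁻ t in simSet m a, ENNReal.ofReal (g m n t)
      = ENNReal.ofReal (a ^ (n+1) / ((n:ℝ)+1) ^ (m+1)) := by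
  induction m with
  | zero =>
    intro a ha
    have mp := volume_preserving_funUnique (Fin 1) ℝ
    have key := mp.setLIntegral_comp_preimage (s := Set.Ioo 0 a)
      (f := fun x => ENNReal.ofReal (x ^ n))
      measurableSet_Ioo (ENNReal.measurable_ofReal.comp ((measurable_id).pow_const n))
    have hs : (⇑(MeasurableEquiv.funUnique (Fin 1) ℝ)) ⁻¹' Set.Ioo 0 a = simSet 0 a := by
      ext t
      simp only [MeasurableEquiv.funUnique, simSet, Set.mem_preimage, Set.mem_Ioo,
        Set.mem_setOf_eq, Equiv.funUnique, Fin.default_eq_zero]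
      constructor
      · rintro ⟨h1, h2⟩; exact ⟨h1, fun i => i.elim0, h2⟩
      · rintro ⟨h1, _, h2⟩; exact ⟨h1, h2⟩
    rw [hs] at key
    have h2 : ∫⁻ t in simSet 0 a, ENNReal.ofReal (g 0 n t)
        = ∫⁻ t in simSet 0 a,
            (fun x => ENNReal.ofReal (x ^ n)) ((MeasurableEquiv.funUnique (Fin 1) ℝ) t) :=
      lintegral_congr fun t => by simp [g, MeasurableEquiv.funUnique, Fin.default_eq_zero]
    rw [h2]
    refine key.trans ?_
    rw [lint_pow ha n]
    norm_num
  | succ m ih =>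
    intro a ha
    set e := MeasurableEquiv.piFinSuccAbove (fun _ : Fin (m+2) => ℝ) 0 with he
    have mp := volume_preserving_piFinSuccAbove (fun _ : Fin (m+2) => ℝ) 0
    set F : ℝ × (Fin (m+1) → ℝ) → ℝ≥0∞ :=
      fun p => ENNReal.ofReal (p.1 ^ n * ∏ j : Fin (m+1), (p.2 j)⁻¹) with hF
    have hmeasF : Measurable F := by
      apply ENNReal.measurable_ofReal.comp
      exact (measurable_fst.pow_const n).mul
        (Finset.measurable_prod _ fun j _ => ((measurable_pi_apply j).comp measurable_snd).inv)
    set T : Set (ℝ × (Fin (m+1) → ℝ)) :=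
      {p | p.1 ∈ Set.Ioo 0 (p.2 0) ∧ p.2 ∈ simSet m a} with hT
    have hTm : MeasurableSet T := by
      have e1 : MeasurableSet {p : ℝ × (Fin (m+1) → ℝ) | 0 < p.1} :=
        measurableSet_lt measurable_const measurable_fst
      have e2 : MeasurableSet {p : ℝ × (Fin (m+1) → ℝ) | p.1 < p.2 0} :=
        measurableSet_lt measurable_fst ((measurable_pi_apply 0).comp measurable_snd)
      have e3 : MeasurableSet {p : ℝ × (Fin (m+1) → ℝ) | p.2 ∈ simSet m a} :=
        (measurableSet_simSet m a).preimage measurable_snd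
      have : T = ({p : ℝ × (Fin (m+1) → ℝ) | 0 < p.1} ∩ {p | p.1 < p.2 0}) ∩
          {p | p.2 ∈ simSet m a} := by
        ext p; simp [hT, Set.mem_Ioo, and_assoc]
      rw [this]; exact ((e1.inter e2).inter e3)
    have he_app : ∀ t : Fin (m+2) → ℝ, e t = (t 0, fun j : Fin (m+1) => t j.succ) := by
      intro t
      simp [he, MeasurableEquiv.piFinSuccAbove]
      rfl
    have hset : simSet (m+1) a = e ⁻¹' T := by
      ext t
      rw [Set.mem_preimage, he_app]
      simp only [hT, simSet, Set.mem_setOf_eq, Set.mem_Ioo]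
      constructor
      · rintro ⟨h1, h2, h3⟩
        have h01 : t 0 < t (Fin.succ 0) := by simpa using h2 0
        refine ⟨⟨h1, h01⟩, lt_trans h1 h01, ?_, ?_⟩
        · intro i
          simpa only [Fin.succ_castSucc] using h2 i.succ
        · simpa [Fin.succ_last] using h3
      · rintro ⟨⟨hx0, hx1⟩, _, hs1, hs2⟩
        refine ⟨hx0, ?_, ?_⟩
        · intro i
          refine Fin.cases ?_ ?_ i
          · simpa using hx1
          · intro j
            simpa only [Fin.succ_castSucc] using hs1 j
        · simpa [Fin.succ_last] using hs2
    have step1 : ∫⁻ t in simSet (m+1) a, ENNReal.ofReal (g (m+1) n t) = ∫⁻ p in T, F p := by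
      rw [hset, ← mp.setLIntegral_comp_preimage hTm hmeasF]
      apply lintegral_congr
      intro t
      rw [he_app t]
      simp [hF, g]
    rw [step1, Measure.volume_eq_prod, ← lintegral_indicator hTm F,
      lintegral_prod_symm _ ((hmeasF.indicator hTm).aemeasurable)]
    have inner : ∀ s : Fin (m+1) → ℝ,
        (∫⁻ x, T.indicator F (x, s))
          = (simSet m a).indicator
              (fun s => ENNReal.ofReal (g m n s * (1/((n:ℝ)+1)))) s := by
      intro s
      by_cases hs : s ∈ simSet m a
      · rw [Set.indicator_of_mem hs]
        have hx : ∀ x : ℝ, T.indicator F (x, s)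
            = (Set.Ioo 0 (s 0)).indicator (fun x => F (x, s)) x := by
          intro x
          by_cases hmem : x ∈ Set.Ioo 0 (s 0)
          · rw [Set.indicator_of_mem hmem,
              Set.indicator_of_mem (show (x, s) ∈ T from ⟨hmem, hs⟩)]
          · rw [Set.indicator_of_notMem hmem,
              Set.indicator_of_notMem (fun hc => hmem hc.1)]
        simp_rw [hx]
        rw [lintegral_indicator measurableSet_Ioo _]
        have hP : (0:ℝ) ≤ ∏ j : Fin (m+1), (s j)⁻¹ :=
          Finset.prod_nonneg fun j _ => inv_nonneg.2 (simSet_pos hs j).le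
        have hcong : ∫⁻ x in Set.Ioo 0 (s 0), F (x, s)
            = ∫⁻ x in Set.Ioo 0 (s 0),
                ENNReal.ofReal (x ^ n) * ENNReal.ofReal (∏ j : Fin (m+1), (s j)⁻¹) := by
          apply setLIntegral_congr_fun measurableSet_Ioo
          intro x hxm
          simp only [hF]
          rw [ENNReal.ofReal_mul (pow_nonneg hxm.1.le n)]
        rw [hcong, lintegral_mul_const' _ _ ENNReal.ofReal_ne_top,
          lint_pow (simSet_pos hs 0) n, ← ENNReal.ofReal_mul
            (div_nonneg (pow_nonneg (simSet_pos hs 0).le _) (by positivity))]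
        congr 1
        have h0 : (s 0) ≠ 0 := (simSet_pos hs 0).ne'
        simp only [g]
        rw [Fin.prod_univ_succ]
        have hkey : s 0 ^ (n+1) * (s 0)⁻¹ = s 0 ^ n := by
          rw [pow_succ, mul_assoc, mul_inv_cancel₀ h0, mul_one]
        have hstep : s 0 ^ (n+1) / ((n:ℝ)+1) * ((s 0)⁻¹ * ∏ j : Fin m, (s j.succ)⁻¹)
            = (s 0 ^ (n+1) * (s 0)⁻¹) * (∏ j : Fin m, (s j.succ)⁻¹) * (1/((n:ℝ)+1)) := by
          ring
        rw [hstep, hkey]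
      · rw [Set.indicator_of_notMem hs]
        have hz : ∀ x : ℝ, T.indicator F (x, s) = 0 :=
          fun x => Set.indicator_of_notMem (fun hc => hs hc.2) _
        simp [hz]
    simp_rw [inner]
    rw [lintegral_indicator (measurableSet_simSet m a) _]
    have hmul : ∀ s : Fin (m+1) → ℝ, ENNReal.ofReal (g m n s * (1/((n:ℝ)+1)))
        = ENNReal.ofReal (g m n s) * ENNReal.ofReal (1/((n:ℝ)+1)) := by
      intro s
      rw [ENNReal.ofReal_mul' (by positivity)]
    simp_rw [hmul]
    rw [lintegral_mul_const' _ _ ENNReal.ofReal_ne_top, ih ha,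
      ← ENNReal.ofReal_mul (by positivity)]
    congr 1
    have hn : ((n:ℝ)+1) ≠ 0 := by positivity
    rw [pow_succ ((n:ℝ)+1) (m+1)]
    field_simp

lemma prod_erase_succ (m : ℕ) (t : Fin (m+1) → ℝ) (h0 : t 0 ≠ 0) :
    ∏ j ∈ Finset.univ.erase (0 : Fin (m+1)), (1 / t j) = ∏ j : Fin m, (t j.succ)⁻¹ := by
  have h1 := Finset.mul_prod_erase Finset.univ (fun j => 1 / t j)
    (Finset.mem_univ (0 : Fin (m+1)))
  have h2 : ∏ j : Fin (m+1), (1 / t j) = (1 / t 0) * ∏ j : Fin m, (1 / t j.succ) :=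
    Fin.prod_univ_succ _
  rw [h2] at h1
  have h3 := mul_left_cancel₀ (one_div_ne_zero h0) h1
  simpa [one_div] using h3

/-- The iterated-integral evaluation of the `k`-th polylogarithm: for `0 < a < 1`,
the function `t ↦ (1/(1 − t 0)) · ∏_{j=1}^{k−1} 1/(t j)` is Lebesgue-integrable on the
open simplex `Δ = {0 < t 0 < t 1 < ⋯ < t (k−1) < a}` and its integral equals
`Li_k(a) = ∑_{n≥1} aⁿ/nᵏ`. -/
theorem integral_simplex_eq_polylog (k : ℕ) (hk : 1 ≤ k) (a : ℝ) (ha0 : 0 < a)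
    (ha1 : a < 1) :
    let Δ : Set (Fin k → ℝ) :=
      {t | 0 < t ⟨0, hk⟩ ∧
        (∀ j : ℕ, ∀ h : j + 1 < k, t ⟨j, by omega⟩ < t ⟨j + 1, h⟩) ∧
        t ⟨k - 1, by omega⟩ < a}
    let f : (Fin k → ℝ) → ℝ := fun t =>
      (1 / (1 - t ⟨0, hk⟩)) * ∏ j ∈ Finset.univ.erase (⟨0, hk⟩ : Fin k), (1 / t j)
    MeasureTheory.IntegrableOn f Δ ∧
      ∫ t in Δ, f t = ∑' n : ℕ, a ^ (n + 1) / ((n : ℝ) + 1) ^ k := by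
  obtain ⟨m, rfl⟩ : ∃ m, k = m + 1 := ⟨k - 1, by omega⟩
  intro Δ f
  have hmk : (⟨0, hk⟩ : Fin (m+1)) = 0 := rfl
  have hlast : (⟨m + 1 - 1, by omega⟩ : Fin (m+1)) = Fin.last m := Fin.ext (by simp)
  have hΔ : Δ = simSet m a := by
    ext t
    constructor
    · rintro ⟨h1, h2, h3⟩
      refine ⟨h1, fun i => h2 i.val (by omega), ?_⟩
      rwa [hlast] at h3
    · rintro ⟨h1, h2, h3⟩
      refine ⟨h1, fun j hj => h2 ⟨j, by omega⟩, ?_⟩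
      rwa [hlast]
  have hf_eq : ∀ t : Fin (m+1) → ℝ,
      f t = (1 / (1 - t 0)) * ∏ j ∈ Finset.univ.erase (0 : Fin (m+1)), (1 / t j) := fun t => rfl
  have hfs : ∀ t ∈ simSet m a,
      ENNReal.ofReal (f t) = ∑' n : ℕ, ENNReal.ofReal (g m n t) := by
    intro t ht
    have h00 : (0:ℝ) < t 0 := simSet_pos ht 0
    have ht0 : t 0 < 1 := lt_trans (simSet_lt ht 0) ha1
    have hprod := prod_erase_succ m t h00.ne'
    have hgeo : ∑' n : ℕ, (t 0) ^ n = (1 - t 0)⁻¹ :=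
      tsum_geometric_of_lt_one h00.le ht0
    have hsummable : Summable (fun n : ℕ => g m n t) := by
      simp only [g]
      exact (summable_geometric_of_lt_one h00.le ht0).mul_right _
    have hft : f t = ∑' n : ℕ, g m n t := by
      rw [hf_eq, hprod]
      simp only [g]
      rw [tsum_mul_right, hgeo, one_div]
    rw [hft, ENNReal.ofReal_tsum_of_nonneg (fun n => g_nonneg ht) hsummable]
  have hnonneg : ∀ n : ℕ, 0 ≤ a ^ (n + 1) / ((n:ℝ) + 1) ^ (m+1) := fun n => by positivity
  have hsummable2 : Summable (fun n : ℕ => a ^ (n + 1) / ((n:ℝ) + 1) ^ (m+1)) := by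
    apply Summable.of_nonneg_of_le hnonneg (fun n => ?_)
      ((summable_geometric_of_lt_one ha0.le ha1).mul_right a)
    have h1n : (1:ℝ) ≤ (n:ℝ) + 1 := le_add_of_nonneg_left (Nat.cast_nonneg n)
    calc a ^ (n + 1) / ((n:ℝ) + 1) ^ (m+1) ≤ a ^ (n + 1) :=
          div_le_self (by positivity) (one_le_pow₀ h1n)
      _ = a ^ n * a := pow_succ a n
  have hlint : ∫⁻ t in simSet m a, ENNReal.ofReal (f t)
      = ENNReal.ofReal (∑' n : ℕ, a ^ (n + 1) / ((n:ℝ) + 1) ^ (m+1)) := by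
    rw [setLIntegral_congr_fun (measurableSet_simSet m a) hfs]
    rw [lintegral_tsum (fun n => (g_meas m n).aemeasurable)]
    have hterm : ∀ n : ℕ, ∫⁻ t in simSet m a, ENNReal.ofReal (g m n t)
        = ENNReal.ofReal (a ^ (n+1) / ((n:ℝ)+1) ^ (m+1)) := fun n => key m n ha0
    simp_rw [hterm]
    rw [← ENNReal.ofReal_tsum_of_nonneg hnonneg hsummable2]
  have hf_nonneg : ∀ t ∈ simSet m a, 0 ≤ f t := by
    intro t ht
    rw [hf_eq]
    apply mul_nonneg
    · have : t 0 < 1 := lt_trans (simSet_lt ht 0) ha1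
      exact div_nonneg zero_le_one (by linarith)
    · exact Finset.prod_nonneg fun j _ => by
        have := simSet_pos ht j
        positivity
  have hfm : Measurable f := by
    apply Measurable.mul
    · exact measurable_const.div (measurable_const.sub (measurable_pi_apply _))
    · exact Finset.measurable_prod _ fun j _ => measurable_const.div (measurable_pi_apply j)
  rw [hΔ]
  have hae : 0 ≤ᵐ[volume.restrict (simSet m a)] f :=
    (ae_restrict_iff' (measurableSet_simSet m a)).2 (ae_of_all _ hf_nonneg)
  refine ⟨⟨hfm.aestronglyMeasurable, ?_⟩, ?_⟩
  · rw [hasFiniteIntegral_iff_ofReal hae, hlint]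
    exact ENNReal.ofReal_lt_top
  · rw [integral_eq_lintegral_of_nonneg_ae hae hfm.aestronglyMeasurable, hlint,
      ENNReal.toReal_ofReal (tsum_nonneg hnonneg)]
end

section
/- Let E be a real vector space, K a geometric simplicial complex in E (in the sense of Mathlib's Geometry.SimplicialComplex), and L a subcomplex of K (a simplicial complex with L.faces ⊆ K.faces) which is full in K. Then for every face s of K, (convexHull ℝ ↑s) ∩ |L| = convexHull ℝ (↑s ∩ V(L)), where |L| denotes the union of the convex hulls of the faces of L and V(L) denotes the set of vertices of L. In particular, the intersection of each simplex of K with |L| is the convex hull of a (possibly empty) simplicial face of that simplex. -/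
open Geometry

/-- If `L` is a full subcomplex of a geometric simplicial complex `K`, then for every
face `s` of `K` the intersection of the simplex `convexHull ℝ s` with the polytope `|L|`
is the convex hull of `s ∩ V(L)`, i.e. a (possibly empty) simplicial face of `s`. -/
theorem full_subcomplex_inter_space {E : Type*} [AddCommGroup E] [Module ℝ E]
    (K L : Geometry.SimplicialComplex ℝ E)
    (hsub : L.faces ⊆ K.faces)
    (hfull : ∀ s ∈ K.faces, (s : Set E) ⊆ L.vertices → s ∈ L.faces) :
    ∀ s ∈ K.faces,
      convexHull ℝ (s : Set E) ∩ L.space = convexHull ℝ ((s : Set E) ∩ L.vertices) := by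
  classical
  intro s hs
  apply Set.Subset.antisymm
  · rintro x ⟨hxs, hxL⟩
    rw [SimplicialComplex.space, Set.mem_iUnion₂] at hxL
    obtain ⟨t, ht, hxt⟩ := hxL
    have h := K.inter_subset_convexHull hs (hsub ht) ⟨hxs, hxt⟩
    refine convexHull_mono ?_ h
    rintro y ⟨hys, hyt⟩
    refine ⟨hys, ?_⟩
    exact L.down_closed ht (Finset.singleton_subset_iff.2 hyt)
      (Finset.singleton_nonempty _)
  · set t : Finset E := s.filter (· ∈ L.vertices) with ht
    have hts : (t : Set E) = (s : Set E) ∩ L.vertices := by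
      ext y; simp [ht, Set.mem_inter_iff, and_comm]
    rw [← hts]
    rcases t.eq_empty_or_nonempty with h0 | hne
    · simp [h0]
    · have htK : t ∈ K.faces :=
        K.down_closed hs (Finset.filter_subset _ _) hne
      have htL : t ∈ L.faces := hfull t htK (by rw [hts]; exact Set.inter_subset_right)
      exact Set.subset_inter
        (convexHull_mono (by rw [hts]; exact Set.inter_subset_left))
        (L.convexHull_subset_space htL)
end

section
/- Let V be a type, K an abstract simplicial complex on V, and let L₁ and L₂ be subcomplexes of K such that L₂ is full in K and L₁ ∪ L₂ is full in K. Then N(L₁, K) ∩ L₂ = N(L₁ ∩ L₂, L₂), where on the left-hand side the intersection means the set of faces lying in both N(L₁,K) and L₂, and L₁ ∩ L₂ is the subcomplex whose faces are the common faces of L₁ and L₂. -/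
/-- An abstract simplicial complex on `V`: a set of nonempty finite subsets of `V`
closed under passing to nonempty subsets. -/
def IsAbstractComplex {V : Type*} (K : Set (Finset V)) : Prop :=
  (∀ σ ∈ K, σ.Nonempty) ∧ ∀ σ ∈ K, ∀ τ : Finset V, τ ⊆ σ → τ.Nonempty → τ ∈ K

/-- A subcomplex `L` of `K` is full in `K` if every face of `K` all of whose elements
are vertices of `L` belongs to `L`. -/
def IsFullIn {V : Type*} (K L : Set (Finset V)) : Prop :=
  ∀ σ ∈ K, (∀ v ∈ σ, ({v} : Finset V) ∈ L) → σ ∈ L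

/-- The simplicial neighborhood `N(L, K)`: faces `σ` of `K` admitting `η ∈ K` with
`σ ⊆ η` such that some element of `η` is a vertex of `L`. -/
def simplicialNbhd {V : Type*} (K L : Set (Finset V)) : Set (Finset V) :=
  {σ ∈ K | ∃ η ∈ K, σ ⊆ η ∧ ∃ v ∈ η, ({v} : Finset V) ∈ L}

/-- The paper's Lemma (res of neighbor): if `L₂` and `L₁ ∪ L₂` are full subcomplexes of
`K`, then `N(L₁, K) ∩ L₂ = N(L₁ ∩ L₂, L₂)`. -/
theorem nbhd_inter_full {V : Type*} (K L₁ L₂ : Set (Finset V))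
    (hK : IsAbstractComplex K) (hL₁ : IsAbstractComplex L₁) (hL₂ : IsAbstractComplex L₂)
    (hL₁K : L₁ ⊆ K) (hL₂K : L₂ ⊆ K)
    (hfull₂ : IsFullIn K L₂) (hfull₁₂ : IsFullIn K (L₁ ∪ L₂)) :
    simplicialNbhd K L₁ ∩ L₂ = simplicialNbhd L₂ (L₁ ∩ L₂) := by
  classical
  ext σ
  constructor
  · rintro ⟨⟨hσK, η, hηK, hση, v, hvη, hvL₁⟩, hσL₂⟩
    -- consider τ = σ ∪ {v}
    set τ : Finset V := insert v σ with hτ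
    have hτη : τ ⊆ η := Finset.insert_subset hvη hση
    have hτK : τ ∈ K := hK.2 η hηK τ hτη (Finset.insert_nonempty _ _)
    have hvert : ∀ w ∈ τ, ({w} : Finset V) ∈ L₁ ∪ L₂ := by
      intro w hw
      rcases Finset.mem_insert.1 hw with h | h
      · exact Or.inl (h ▸ hvL₁)
      · exact Or.inr (hL₂.2 σ hσL₂ {w} (Finset.singleton_subset_iff.2 h)
          (Finset.singleton_nonempty _))
    rcases hfull₁₂ τ hτK hvert with hτL₁ | hτL₂
    · -- σ ⊆ τ ∈ L₁ so σ ∈ L₁; use η' = σ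
      have hσne : σ.Nonempty := hK.1 σ hσK
      have hσL₁ : σ ∈ L₁ := hL₁.2 τ hτL₁ σ (Finset.subset_insert _ _) hσne
      obtain ⟨w, hw⟩ := hσne
      refine ⟨hσL₂, σ, hσL₂, Finset.Subset.refl _, w, hw, ?_, ?_⟩
      · exact hL₁.2 σ hσL₁ {w} (Finset.singleton_subset_iff.2 hw)
          (Finset.singleton_nonempty _)
      · exact hL₂.2 σ hσL₂ {w} (Finset.singleton_subset_iff.2 hw)
          (Finset.singleton_nonempty _)
    · refine ⟨hσL₂, τ, hτL₂, Finset.subset_insert _ _, v, Finset.mem_insert_self _ _,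
        hvL₁, ?_⟩
      exact hL₂.2 τ hτL₂ {v} (Finset.singleton_subset_iff.2 (Finset.mem_insert_self _ _))
        (Finset.singleton_nonempty _)
  · rintro ⟨hσL₂, η, hηL₂, hση, v, hvη, hvL₁, hvL₂⟩
    exact ⟨⟨hL₂K hσL₂, η, hL₂K hηL₂, hση, v, hvη, hvL₁⟩, hσL₂⟩
end

section
/- Let V be a type equipped with a partial order ≤, K an abstract simplicial complex on V, and L a full subcomplex of K. Assume the restriction of ≤ to each face of K is a total order, and that the ordering is good with respect to L, i.e., whenever v is a vertex of L, w is a vertex of K, and v ≤ w, then w is a vertex of L. Then for every face σ ∈ K and every v ∈ σ which is a vertex of L, the set {w ∈ σ : v ≤ w} is a face of L. -/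
/-- For a good ordering of `K` with respect to a full subcomplex `L`: if
`σ = [v₀ < ⋯ < v_n]` is a face of `K` and `v ∈ σ` is a vertex of `L`, then
`{w ∈ σ : v ≤ w}` is a face of `L`. -/
theorem upper_set_of_good_ordering {V : Type*} [PartialOrder V]
    [DecidableRel ((· ≤ ·) : V → V → Prop)]
    (K L : Set (Finset V)) (hK : IsAbstractComplex K) (hL : IsAbstractComplex L)
    (hLK : L ⊆ K) (hfull : IsFullIn K L)
    (htotal : ∀ σ ∈ K, ∀ v ∈ σ, ∀ w ∈ σ, v ≤ w ∨ w ≤ v)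
    (hgood : ∀ v w : V, ({v} : Finset V) ∈ L → ({w} : Finset V) ∈ K → v ≤ w →
      ({w} : Finset V) ∈ L) :
    ∀ σ ∈ K, ∀ v ∈ σ, ({v} : Finset V) ∈ L →
      σ.filter (fun w => v ≤ w) ∈ L := by
  intro σ hσ v hv hvL
  have hsub : σ.filter (fun w => v ≤ w) ⊆ σ := Finset.filter_subset _ _
  have hne : (σ.filter (fun w => v ≤ w)).Nonempty :=
    ⟨v, Finset.mem_filter.mpr ⟨hv, le_refl v⟩⟩
  have hτK : σ.filter (fun w => v ≤ w) ∈ K := hK.2 σ hσ _ hsub hne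
  exact hfull _ hτK fun w hw => by
    obtain ⟨hwσ, hvw⟩ := Finset.mem_filter.mp hw
    exact hgood v w hvL (hK.2 σ hσ {w} (Finset.singleton_subset_iff.mpr hwσ)
      (Finset.singleton_nonempty w)) hvw
end
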